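/- For a probability measure ρ on S^{d-1}, the Gibbs-weighted mean v_α satisfies |v_α|^2 ≥ 1 − 4 C_{α,E}^2 V(ρ), where C_{α,E} = e^{α(sup E − inf E)} and V(ρ) is the variance of ρ. -/

import Mathlib

open MeasureTheory Metric Real

set_option maxHeartbeats 800000 in
theorem stmt_5 {d : ℕ} (e : EuclideanSpace ℝ (Fin d) → ℝ) (α : ℝ) (hα : 0 < α)
    (hcont : ContinuousOn e (sphere (0 : EuclideanSpace ℝ (Fin d)) 1))
    (hbdd : BddAbove (e '' sphere (0 : EuclideanSpace ℝ (Fin d)) 1) ∧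
      BddBelow (e '' sphere (0 : EuclideanSpace ℝ (Fin d)) 1))
    (ρ : Measure (EuclideanSpace ℝ (Fin d))) [IsProbabilityMeasure ρ]
    (hsph : ∀ᵐ v ∂ρ, ‖v‖ = 1)
    (m : EuclideanSpace ℝ (Fin d)) (hm : m = ∫ w, w ∂ρ)
    (V : ℝ) (hV : V = (1 / 2) * ∫ v, ‖v - m‖ ^ 2 ∂ρ)
    (vα : EuclideanSpace ℝ (Fin d))
    (hvα : vα = (∫ v, Real.exp (-α * e v) ∂ρ)⁻¹ • ∫ v, Real.exp (-α * e v) • v ∂ρ)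
    (C : ℝ)
    (hC : C = Real.exp (α * (sSup (e '' sphere (0 : EuclideanSpace ℝ (Fin d)) 1)
      - sInf (e '' sphere (0 : EuclideanSpace ℝ (Fin d)) 1)))) :
    1 - 4 * C ^ 2 * V ≤ ‖vα‖ ^ 2 := by
  classical
  obtain ⟨hbA, hbB⟩ := hbdd
  set s : Set (EuclideanSpace ℝ (Fin d)) := sphere (0 : EuclideanSpace ℝ (Fin d)) 1 with hsdef
  set M : ℝ := sSup (e '' s) with hM
  set I : ℝ := sInf (e '' s) with hI
  have hmem : ∀ᵐ v ∂ρ, v ∈ s := by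
    filter_upwards [hsph] with v hv
    simpa [hsdef, mem_sphere_iff_norm] using hv
  have hres : ρ.restrict s = ρ :=
    Measure.restrict_eq_self_of_ae_mem hmem
  have haesm_e : AEStronglyMeasurable e ρ := by
    have := hcont.aestronglyMeasurable (Metric.isClosed_sphere.measurableSet) (μ := ρ)
    rwa [hres] at this
  set f : EuclideanSpace ℝ (Fin d) → ℝ := fun v => Real.exp (-α * e v) with hfdef
  have haesm_f : AEStronglyMeasurable f ρ := by
    have hg : Continuous fun t : ℝ => Real.exp (-α * t) :=
      Real.continuous_exp.comp (continuous_const.mul continuous_id)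
    exact hg.comp_aestronglyMeasurable haesm_e
  have hbnd : ∀ᵐ v ∂ρ, e v ≤ M ∧ I ≤ e v := by
    filter_upwards [hmem] with v hv
    exact ⟨le_csSup hbA ⟨v, hv, rfl⟩, csInf_le hbB ⟨v, hv, rfl⟩⟩
  -- pointwise bounds on f
  have hfub : ∀ᵐ v ∂ρ, f v ≤ Real.exp (-α * I) := by
    filter_upwards [hbnd] with v hv
    exact Real.exp_le_exp.mpr (by nlinarith [hv.2, hα.le])
  have hflb : ∀ᵐ v ∂ρ, Real.exp (-α * M) ≤ f v := by
    filter_upwards [hbnd] with v hv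
    exact Real.exp_le_exp.mpr (by nlinarith [hv.1, hα.le])
  have hfpos : ∀ v, 0 < f v := fun v => Real.exp_pos _
  -- integrabilities
  have hint_f : Integrable f ρ := by
    refine ⟨haesm_f, HasFiniteIntegral.of_bounded (C := Real.exp (-α * I)) ?_⟩
    filter_upwards [hfub] with v hv
    rw [Real.norm_eq_abs, abs_of_pos (hfpos v)]; exact hv
  have hint_fv : Integrable (fun v => f v • v) ρ := by
    refine ⟨haesm_f.smul aestronglyMeasurable_id, HasFiniteIntegral.of_bounded (C := Real.exp (-α * I)) ?_⟩
    filter_upwards [hfub, hsph] with v hv hn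
    rw [norm_smul, Real.norm_eq_abs, abs_of_pos (hfpos v), hn, mul_one]; exact hv
  have hcont_nm : Continuous fun v : EuclideanSpace ℝ (Fin d) => ‖v - m‖ ^ 2 := by
    continuity
  have hint_nm : Integrable (fun v => ‖v - m‖ ^ 2) ρ := by
    refine ⟨hcont_nm.aestronglyMeasurable, HasFiniteIntegral.of_bounded (C := (1 + ‖m‖) ^ 2) ?_⟩
    filter_upwards [hsph] with v hv
    have h1 : ‖v - m‖ ≤ 1 + ‖m‖ := by
      calc ‖v - m‖ ≤ ‖v‖ + ‖m‖ := norm_sub_le _ _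
      _ = 1 + ‖m‖ := by rw [hv]
    rw [Real.norm_eq_abs, abs_of_nonneg (by positivity)]
    exact pow_le_pow_left₀ (norm_nonneg _) h1 2
  have hint_fnm : Integrable (fun v => f v * ‖v - m‖ ^ 2) ρ := by
    refine ⟨haesm_f.mul hcont_nm.aestronglyMeasurable,
      HasFiniteIntegral.of_bounded (C := Real.exp (-α * I) * (1 + ‖m‖) ^ 2) ?_⟩
    filter_upwards [hfub, hsph] with v hv hn
    have h1 : ‖v - m‖ ≤ 1 + ‖m‖ := by
      calc ‖v - m‖ ≤ ‖v‖ + ‖m‖ := norm_sub_le _ _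
      _ = 1 + ‖m‖ := by rw [hn]
    have h2 : ‖v - m‖ ^ 2 ≤ (1 + ‖m‖) ^ 2 := pow_le_pow_left₀ (norm_nonneg _) h1 2
    rw [Real.norm_eq_abs, abs_of_nonneg (by positivity)]
    exact mul_le_mul hv h2 (by positivity) (Real.exp_pos _).le
  have hcont_in : Continuous fun v : EuclideanSpace ℝ (Fin d) => (inner ℝ m v : ℝ) :=
    continuous_const.inner continuous_id
  have hint_fin : Integrable (fun v => f v * (inner ℝ m v : ℝ)) ρ := by
    refine ⟨haesm_f.mul hcont_in.aestronglyMeasurable,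
      HasFiniteIntegral.of_bounded (C := Real.exp (-α * I) * ‖m‖) ?_⟩
    filter_upwards [hfub, hsph] with v hv hn
    have h1 : |(inner ℝ m v : ℝ)| ≤ ‖m‖ := by
      calc |(inner ℝ m v : ℝ)| ≤ ‖m‖ * ‖v‖ := abs_real_inner_le_norm m v
      _ = ‖m‖ := by rw [hn, mul_one]
    rw [Real.norm_eq_abs, abs_mul, abs_of_pos (hfpos v)]
    exact mul_le_mul hv h1 (abs_nonneg _) (Real.exp_pos _).le
  -- Z
  set Z : ℝ := ∫ v, f v ∂ρ with hZ
  have hZlb : Real.exp (-α * M) ≤ Z := by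
    have h0 : ∫ (_ : EuclideanSpace ℝ (Fin d)), Real.exp (-α * M) ∂ρ = Real.exp (-α * M) := by
      simp
    rw [← h0]
    exact integral_mono_ae (integrable_const _) hint_f hflb
  have hZpos : 0 < Z := lt_of_lt_of_le (Real.exp_pos _) hZlb
  set W : EuclideanSpace ℝ (Fin d) := ∫ v, f v • v ∂ρ with hW
  have hWZ : W = Z • vα := by
    rw [hvα, smul_smul, mul_inv_cancel₀ hZpos.ne', one_smul]
  -- main identity
  have hpt : ∀ᵐ v ∂ρ, f v * ‖v - m‖ ^ 2
      = f v - 2 * (f v * (inner ℝ m v : ℝ)) + f v * ‖m‖ ^ 2 := by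
    filter_upwards [hsph] with v hv
    have h1 : ‖v - m‖ ^ 2 = ‖v‖ ^ 2 - 2 * (inner ℝ m v : ℝ) + ‖m‖ ^ 2 := by
      have h2 := norm_sub_sq_real v m
      rw [real_inner_comm m v] at h2
      exact h2
    rw [h1, hv]; ring
  have hinner : ∫ v, f v * (inner ℝ m v : ℝ) ∂ρ = Z * (inner ℝ vα m : ℝ) := by
    have h1 : ∀ v, f v * (inner ℝ m v : ℝ) = (inner ℝ m (f v • v) : ℝ) := by
      intro v; rw [real_inner_smul_right]
    calc ∫ v, f v * (inner ℝ m v : ℝ) ∂ρ = ∫ v, (inner ℝ m (f v • v) : ℝ) ∂ρ := by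
          simp_rw [h1]
      _ = (inner ℝ m W : ℝ) := integral_inner hint_fv m
      _ = Z * (inner ℝ vα m : ℝ) := by rw [hWZ, real_inner_smul_right, real_inner_comm]
  have hmain : ∫ v, f v * ‖v - m‖ ^ 2 ∂ρ
      = Z - 2 * (Z * (inner ℝ vα m : ℝ)) + Z * ‖m‖ ^ 2 := by
    rw [integral_congr_ae hpt]
    rw [integral_add (by exact (hint_f.sub (hint_fin.const_mul 2))) (hint_f.mul_const _),
      integral_sub hint_f (hint_fin.const_mul 2), integral_const_mul, integral_mul_const,
      hinner]
  -- lower bound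
  have hlow : Z * (1 - ‖vα‖ ^ 2) ≤ ∫ v, f v * ‖v - m‖ ^ 2 ∂ρ := by
    rw [hmain]
    have h1 : ‖vα - m‖ ^ 2 = ‖vα‖ ^ 2 - 2 * (inner ℝ vα m : ℝ) + ‖m‖ ^ 2 := norm_sub_sq_real vα m
    nlinarith [mul_nonneg hZpos.le (sq_nonneg ‖vα - m‖)]
  -- upper bound
  have hVnn : 0 ≤ V := by
    rw [hV]
    have : 0 ≤ ∫ v, ‖v - m‖ ^ 2 ∂ρ := integral_nonneg fun v => by positivity
    linarith
  have hupp : ∫ v, f v * ‖v - m‖ ^ 2 ∂ρ ≤ Real.exp (-α * I) * (2 * V) := by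
    have h1 : ∫ v, f v * ‖v - m‖ ^ 2 ∂ρ ≤ ∫ v, Real.exp (-α * I) * ‖v - m‖ ^ 2 ∂ρ := by
      refine integral_mono_ae hint_fnm (hint_nm.const_mul _) ?_
      filter_upwards [hfub] with v hv
      exact mul_le_mul_of_nonneg_right hv (by positivity)
    rw [integral_const_mul] at h1
    have h2 : ∫ v, ‖v - m‖ ^ 2 ∂ρ = 2 * V := by rw [hV]; ring
    rw [h2] at h1
    exact h1
  -- combine
  have hIM : I ≤ M := by
    have hne : (ae ρ).NeBot := ae_neBot.mpr (IsProbabilityMeasure.ne_zero ρ)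
    obtain ⟨v₀, hv₀⟩ := hbnd.exists
    linarith [hv₀.1, hv₀.2]
  have hC1 : 1 ≤ C := by
    rw [hC]
    exact Real.one_le_exp (by nlinarith [hα.le])
  have hexp : Real.exp (-α * I) = Real.exp (-α * M) * C := by
    rw [hC, ← Real.exp_add]; ring_nf
  set E0 : ℝ := Real.exp (-α * M) with hE0
  have hE0pos : 0 < E0 := Real.exp_pos _
  have hkey : Z * (1 - ‖vα‖ ^ 2) ≤ E0 * C * (2 * V) := by
    calc Z * (1 - ‖vα‖ ^ 2) ≤ Real.exp (-α * I) * (2 * V) := le_trans hlow hupp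
      _ = E0 * C * (2 * V) := by rw [hexp]
  rcases le_or_gt (1 - ‖vα‖ ^ 2) 0 with h | h
  · have : 0 ≤ 4 * C ^ 2 * V := by positivity
    linarith
  · have h1 : E0 * (1 - ‖vα‖ ^ 2) ≤ Z * (1 - ‖vα‖ ^ 2) :=
      mul_le_mul_of_nonneg_right hZlb h.le
    have h2 : E0 * (1 - ‖vα‖ ^ 2) ≤ E0 * (C * (2 * V)) := by
      calc E0 * (1 - ‖vα‖ ^ 2) ≤ E0 * C * (2 * V) := le_trans h1 hkey
        _ = E0 * (C * (2 * V)) := by ring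
    have h3 : 1 - ‖vα‖ ^ 2 ≤ C * (2 * V) := le_of_mul_le_mul_left h2 hE0pos
    have hCpos : 0 < C := lt_of_lt_of_le one_pos hC1
    have h4 : 0 ≤ V * C * (C - 1) :=
      mul_nonneg (mul_nonneg hVnn hCpos.le) (sub_nonneg.mpr hC1)
    have h5 : 0 ≤ V * C := mul_nonneg hVnn hCpos.le
    nlinarith [h3, h4, h5]
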